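/- Let M ∈ ℕ, let 𝒢 = (G_1, …, G_G) be a partition of Fin M into G nonempty pairwise disjoint groups whose union is Fin M, and let v : Finset (Fin M) → ℝ be separable over 𝒢. Then for every i = 1, …, G, post-grouped Shapley equals groupShapley: ∑_{j ∈ G_i} φ_j(v) = φ_{G_i}. (groupShapley equivalence, Theorem 2.2.) -/

import Mathlib

open Finset

/-- The feature-wise Shapley value of feature `j` for contribution function `v`. -/
noncomputable def shapley {M : ℕ} (v : Finset (Fin M) → ℝ) (j : Fin M) : ℝ :=
  ∑ S ∈ (Finset.univ.erase j).powerset,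
    ((S.card.factorial * (M - S.card - 1).factorial : ℕ) : ℝ) / (M.factorial : ℕ) *
      (v (insert j S) - v S)

/-- The groupShapley value of group `G i` for contribution function `v` and
partition `G` of the features into `Gn` groups. -/
noncomputable def groupShapley {M Gn : ℕ} (G : Fin Gn → Finset (Fin M))
    (v : Finset (Fin M) → ℝ) (i : Fin Gn) : ℝ :=
  ∑ T ∈ (Finset.univ.erase i).powerset,
    ((T.card.factorial * (Gn - T.card - 1).factorial : ℕ) : ℝ) / (Gn.factorial : ℕ) *
      (v (T.biUnion G ∪ G i) - v (T.biUnion G))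

lemma shapley_efficiency {M : ℕ} (hM : 0 < M) (u : Finset (Fin M) → ℝ) :
    ∑ j, shapley u j = u Finset.univ - u ∅ := by
  classical
  set c : ℕ → ℝ := fun s =>
    ((s.factorial * (M - s - 1).factorial : ℕ) : ℝ) / (M.factorial : ℕ) with hc
  have hMfac : (M.factorial : ℝ) ≠ 0 := Nat.cast_ne_zero.mpr (Nat.factorial_ne_zero M)
  have hswap : ∑ j, shapley u j
      = ∑ S ∈ (univ : Finset (Fin M)).powerset, ∑ j ∈ univ \ S,
          c S.card * (u (insert j S) - u S) := by
    unfold shapley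
    exact Finset.sum_comm' (fun j S => by
      simp [Finset.subset_erase, and_comm, and_left_comm])
  rw [hswap]
  have hsplit : ∀ S ∈ (univ : Finset (Fin M)).powerset,
      ∑ j ∈ univ \ S, c S.card * (u (insert j S) - u S)
      = (∑ j ∈ univ \ S, c S.card * u (insert j S)) - ((M - S.card : ℕ) : ℝ) * c S.card * u S := by
    intro S _
    simp only [mul_sub, Finset.sum_sub_distrib]
    congr 1
    rw [Finset.sum_const, card_sdiff_of_subset (subset_univ S), card_univ, Fintype.card_fin, nsmul_eq_mul]
    ring
  rw [Finset.sum_congr rfl hsplit, Finset.sum_sub_distrib]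
  have hfirst : ∑ S ∈ (univ : Finset (Fin M)).powerset, ∑ j ∈ univ \ S,
        c S.card * u (insert j S)
      = ∑ T ∈ (univ : Finset (Fin M)).powerset, ∑ _j ∈ T, c (T.card - 1) * u T := by
    rw [Finset.sum_sigma', Finset.sum_sigma']
    refine Finset.sum_nbij' (fun p => ⟨insert p.2 p.1, p.2⟩) (fun p => ⟨p.1.erase p.2, p.2⟩)
      ?_ ?_ ?_ ?_ ?_
    · rintro ⟨S, j⟩ hp
      simp only [mem_sigma, mem_powerset, mem_sdiff, mem_univ, true_and] at hp ⊢
      exact ⟨subset_univ _, mem_insert_self _ _⟩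
    · rintro ⟨T, j⟩ hp
      simp only [mem_sigma, mem_powerset, mem_sdiff, mem_univ, true_and] at hp ⊢
      exact ⟨subset_univ _, notMem_erase _ _⟩
    · rintro ⟨S, j⟩ hp
      simp only [mem_sigma, mem_powerset, mem_sdiff, mem_univ, true_and] at hp
      simp [Finset.erase_insert hp.2]
    · rintro ⟨T, j⟩ hp
      simp only [mem_sigma, mem_powerset, mem_sdiff, mem_univ, true_and] at hp
      simp [Finset.insert_erase hp.2]
    · rintro ⟨S, j⟩ hp
      simp only [mem_sigma, mem_powerset, mem_sdiff, mem_univ, true_and] at hp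
      rw [Finset.card_insert_of_notMem hp.2, Nat.add_sub_cancel]
  rw [hfirst]
  have hconst : ∀ T ∈ (univ : Finset (Fin M)).powerset,
      (∑ _j ∈ T, c (T.card - 1) * u T) = (T.card : ℝ) * c (T.card - 1) * u T := by
    intro T _
    rw [Finset.sum_const, nsmul_eq_mul]; ring
  rw [Finset.sum_congr rfl hconst, ← Finset.sum_sub_distrib]
  have hcoef : ∀ T ∈ (univ : Finset (Fin M)).powerset,
      (T.card : ℝ) * c (T.card - 1) * u T - ((M - T.card : ℕ) : ℝ) * c T.card * u T
      = ((if T = univ then (1:ℝ) else 0) - (if T = ∅ then (1:ℝ) else 0)) * u T := by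
    intro T _
    have htM : T.card ≤ M := by
      simpa using Finset.card_le_univ T
    rcases Nat.eq_zero_or_pos T.card with h0 | hpos
    · have hTe : T = ∅ := Finset.card_eq_zero.mp h0
      have hTu : T ≠ univ := by
        intro h; rw [h] at h0; simp [Finset.card_univ] at h0; omega
      rw [if_neg hTu, if_pos hTe, h0]
      have : ((M - 0 : ℕ) : ℝ) * c 0 = 1 := by
        rw [hc]; simp only [Nat.sub_zero, Nat.factorial_zero, one_mul]
        rw [← mul_div_assoc, ← Nat.cast_mul, Nat.mul_factorial_pred hM.ne', div_self hMfac]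
      rw [this]; push_cast; ring
    · rcases eq_or_lt_of_le htM with heq | hlt
      · have hTu : T = univ := by
          apply Finset.eq_univ_of_card; rw [heq, Fintype.card_fin]
        have hTe : T ≠ ∅ := by
          intro h; rw [h] at hpos; simp at hpos
        rw [if_pos hTu, if_neg hTe, heq]
        have h1 : (M : ℝ) * c (M - 1) = 1 := by
          rw [hc]
          have : M - (M - 1) - 1 = 0 := by omega
          simp only [this, Nat.factorial_zero, mul_one]
          rw [← mul_div_assoc, ← Nat.cast_mul, Nat.mul_factorial_pred hM.ne', div_self hMfac]
        have h2 : ((M - M : ℕ) : ℝ) = 0 := by simp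
        rw [h1, h2]; ring
      · -- 0 < card < M
        have hTu : T ≠ univ := by
          intro h; rw [h, Finset.card_univ, Fintype.card_fin] at hlt; omega
        have hTe : T ≠ ∅ := by
          intro h; rw [h] at hpos; simp at hpos
        rw [if_neg hTu, if_neg hTe]
        have key : (T.card : ℝ) * c (T.card - 1) = ((M - T.card : ℕ) : ℝ) * c T.card := by
          rw [hc]
          have e1 : M - (T.card - 1) - 1 = M - T.card := by omega
          simp only [e1]
          have hnat : T.card * ((T.card - 1).factorial * (M - T.card).factorial)
              = (M - T.card) * ((T.card).factorial * (M - T.card - 1).factorial) := by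
            have h1 : T.card * (T.card - 1).factorial = (T.card).factorial :=
              Nat.mul_factorial_pred hpos.ne'
            have h2 : (M - T.card) * (M - T.card - 1).factorial = (M - T.card).factorial :=
              Nat.mul_factorial_pred (by omega)
            rw [← h1, ← h2]; ring
          rw [← mul_div_assoc, ← mul_div_assoc, ← Nat.cast_mul, ← Nat.cast_mul, hnat]
        rw [key]; ring
  rw [Finset.sum_congr rfl hcoef]
  simp only [sub_mul, one_mul, Finset.sum_sub_distrib]
  simp only [ite_mul, one_mul, zero_mul]
  rw [Finset.sum_ite_eq' _ _ u, Finset.sum_ite_eq' _ _ u]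
  simp

/-- groupShapley equivalence (Theorem 2.2): if `v` is separable over the partition `G`,
then post-grouped Shapley equals groupShapley for every group. -/
theorem postgrouped_eq_groupShapley
    (M Gn : ℕ) (G : Fin Gn → Finset (Fin M))
    (hne : ∀ i, (G i).Nonempty)
    (hdisj : ∀ i j : Fin Gn, i ≠ j → Disjoint (G i) (G j))
    (hcover : Finset.univ.biUnion G = (Finset.univ : Finset (Fin M)))
    (v : Finset (Fin M) → ℝ)
    (hsep : ∃ w : Fin Gn → Finset (Fin M) → ℝ,
      ∀ S : Finset (Fin M), v S = ∑ i, w i (S ∩ G i))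
    (i : Fin Gn) :
    ∑ j ∈ G i, shapley v j = groupShapley G v i := by
  classical
  obtain ⟨w, hw⟩ := hsep
  obtain ⟨x0, hx0⟩ := hne i
  have hM : 0 < M := x0.pos
  have hGn : 0 < Gn := i.pos
  set u : Finset (Fin M) → ℝ := fun S => w i (S ∩ G i) with hu
  -- LHS
  have hmarg : ∀ j ∈ G i, ∀ S : Finset (Fin M),
      v (insert j S) - v S = u (insert j S) - u S := by
    intro j hj S
    rw [hw, hw, ← Finset.sum_sub_distrib]
    rw [Finset.sum_eq_single_of_mem i (mem_univ i)]
    intro k _ hk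
    have hjk : j ∉ G k := fun hm =>
      (Finset.disjoint_left.mp (hdisj k i hk) hm) hj
    rw [Finset.insert_inter_of_notMem hjk, sub_self]
  have hshap : ∀ j ∈ G i, shapley v j = shapley u j := by
    intro j hj
    unfold shapley
    exact Finset.sum_congr rfl fun S _ => by rw [hmarg j hj S]
  have hzero : ∀ j : Fin M, j ∉ G i → shapley u j = 0 := by
    intro j hj
    unfold shapley
    apply Finset.sum_eq_zero
    intro S _
    rw [hu]
    simp only [Finset.insert_inter_of_notMem hj, sub_self, mul_zero]
  have hLHS : ∑ j ∈ G i, shapley v j = u Finset.univ - u ∅ := by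
    rw [Finset.sum_congr rfl hshap,
      Finset.sum_subset (subset_univ (G i)) (fun x _ hx => hzero x hx),
      shapley_efficiency hM u]
  -- RHS
  have hbiu : ∀ T ∈ (Finset.univ.erase i).powerset, T.biUnion G ∩ G i = ∅ := by
    intro T hT
    rw [mem_powerset] at hT
    apply Finset.eq_empty_of_forall_notMem
    intro x hx
    rw [Finset.mem_inter, Finset.mem_biUnion] at hx
    obtain ⟨⟨k, hkT, hxk⟩, hxi⟩ := hx
    have hki : k ≠ i := (Finset.mem_erase.mp (hT hkT)).1
    exact Finset.disjoint_left.mp (hdisj k i hki) hxk hxi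
  have hC : ∀ T ∈ (Finset.univ.erase i).powerset,
      v (T.biUnion G ∪ G i) - v (T.biUnion G) = w i (G i) - w i ∅ := by
    intro T hT
    rw [hw, hw, ← Finset.sum_sub_distrib]
    rw [Finset.sum_eq_single_of_mem i (mem_univ i)]
    · congr 1
      · rw [Finset.union_inter_distrib_right, hbiu T hT, Finset.inter_self, empty_union]
      · rw [hbiu T hT]
    · intro k _ hk
      have : G i ∩ G k = ∅ := Finset.disjoint_iff_inter_eq_empty.mp (hdisj i k (Ne.symm hk))
      rw [Finset.union_inter_distrib_right, this, union_empty, sub_self]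
  set C : ℝ := w i (G i) - w i ∅ with hCdef
  set u' : Finset (Fin Gn) → ℝ := fun T => if i ∈ T then C else 0 with hu'
  have hgs : groupShapley G v i = shapley u' i := by
    unfold groupShapley shapley
    apply Finset.sum_congr rfl
    intro T hT
    have hiT : i ∉ T := fun h =>
      (Finset.mem_erase.mp ((mem_powerset.mp hT) h)).1 rfl
    rw [hC T hT, hu']
    simp [hiT]
  have hzero' : ∀ j : Fin Gn, j ≠ i → shapley u' j = 0 := by
    intro j hj
    unfold shapley
    apply Finset.sum_eq_zero
    intro T _
    have : i ∈ insert j T ↔ i ∈ T := by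
      simp [Finset.mem_insert, (Ne.symm hj : i ≠ j)]
    rw [hu']
    simp only [this]
    simp
  have hRHS : groupShapley G v i = C := by
    rw [hgs]
    have h1 : shapley u' i = ∑ j, shapley u' j :=
      (Fintype.sum_eq_single i hzero').symm
    rw [h1, shapley_efficiency hGn u', hu']
    simp
  rw [hLHS, hRHS, hCdef, hu]
  simp only [Finset.univ_inter, Finset.empty_inter]
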